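/- Let N be a positive natural number and V = Fin N → ℝ with weighted inner product ⟨f,g⟩ = w·Σ_i f i·g i (w > 0) and pointwise product *. Let Δh : V →ₗ[ℝ] V be symmetric, let a, α, M, Δt be real numbers with M > 0, Δt > 0, let q̄ ∈ V, and define the linear operator A : V → V by Aφ = φ + Δt·M·((1/2)·Δh(Δh φ) + a·Δh φ + (α/2)·φ + (1/4)·(q̄*q̄)*φ). If Δt·M·(a² - α) < 2, then ⟨Aφ, φ⟩ > 0 for every φ ≠ 0; in particular A is injective, hence bijective, so the linear system arising in each time step of the fully discrete scheme admits a unique solution (Theorem 4.4 of the paper). -/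
import Mathlib


/-- Theorem 4.4: unique solvability of the linear system arising at each time
step of the fully discrete scheme (positive definiteness of the coefficient
operator `A` under the smallness condition `Δt·M·(a² - α) < 2`). -/
theorem unique_solvability_of_scheme
    (N : ℕ) (hN : 0 < N) (w : ℝ) (hw : 0 < w)
    (ip : (Fin N → ℝ) → (Fin N → ℝ) → ℝ)
    (hip : ∀ f g, ip f g = w * ∑ i, f i * g i)
    (Δh : (Fin N → ℝ) →ₗ[ℝ] (Fin N → ℝ))
    (hsym : ∀ f g, ip (Δh f) g = ip f (Δh g))
    (a α M Δt : ℝ) (hM : 0 < M) (hΔt : 0 < Δt)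
    (qbar : Fin N → ℝ)
    (A : (Fin N → ℝ) →ₗ[ℝ] (Fin N → ℝ))
    (hA : ∀ φ, A φ = φ + (Δt * M) • ((1 / 2 : ℝ) • Δh (Δh φ) + a • Δh φ +
      (α / 2) • φ + (1 / 4 : ℝ) • ((qbar * qbar) * φ)))
    (hsmall : Δt * M * (a ^ 2 - α) < 2) :
    (∀ φ : Fin N → ℝ, φ ≠ 0 → 0 < ip (A φ) φ) ∧ Function.Bijective A := by
  -- bilinearity lemmas
  have ip_add : ∀ f g h : Fin N → ℝ, ip (f + g) h = ip f h + ip g h := by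
    intro f g h
    simp only [hip, Pi.add_apply, add_mul, Finset.sum_add_distrib, mul_add]
  have ip_smul : ∀ (c : ℝ) (f g : Fin N → ℝ), ip (c • f) g = c * ip f g := by
    intro c f g
    simp only [hip, Pi.smul_apply, smul_eq_mul, mul_assoc, ← Finset.mul_sum]
    ring
  have ip_addr : ∀ f g h : Fin N → ℝ, ip f (g + h) = ip f g + ip f h := by
    intro f g h
    simp only [hip, Pi.add_apply, mul_add, Finset.sum_add_distrib]
  have ip_smulr : ∀ (c : ℝ) (f g : Fin N → ℝ), ip f (c • g) = c * ip f g := by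
    intro c f g
    rw [hip, hip, Finset.sum_congr rfl
      (fun i _ => show f i * (c • g) i = c * (f i * g i) by
        simp [Pi.smul_apply]; ring), ← Finset.mul_sum]
    ring
  have ip_nonneg : ∀ f : Fin N → ℝ, 0 ≤ ip f f := by
    intro f
    rw [hip]
    exact mul_nonneg hw.le (Finset.sum_nonneg fun i _ => mul_self_nonneg _)
  have hpos : ∀ φ : Fin N → ℝ, φ ≠ 0 → 0 < ip (A φ) φ := by
    intro φ hφ
    -- positivity of ‖φ‖²
    have hP : 0 < ip φ φ := by
      rw [hip]
      apply mul_pos hw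
      obtain ⟨i, hi⟩ := Function.ne_iff.mp hφ
      have : (0:ℝ) < φ i * φ i := mul_self_pos.mpr hi
      exact Finset.sum_pos' (fun j _ => mul_self_nonneg _) ⟨i, Finset.mem_univ i, this⟩
    set P := ip φ φ with hPdef
    set L := ip (Δh φ) (Δh φ) with hLdef
    set C := ip (Δh φ) φ with hCdef
    set Q := ip ((qbar * qbar) * φ) φ with hQdef
    have hL : 0 ≤ L := ip_nonneg _
    have hQ : 0 ≤ Q := by
      rw [hQdef, hip]
      apply mul_nonneg hw.le
      apply Finset.sum_nonneg
      intro i _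
      have : (qbar * qbar * φ) i * φ i = (qbar i * φ i) ^ 2 := by
        simp [Pi.mul_apply]; ring
      rw [this]; positivity
    -- Cauchy-type bound: 0 ≤ ‖Δhφ + a•φ‖² = L + 2aC + a²P
    have hkey : 0 ≤ L + 2 * a * C + a ^ 2 * P := by
      have h0 := ip_nonneg (Δh φ + a • φ)
      have hexp : ip (Δh φ + a • φ) (Δh φ + a • φ)
          = L + 2 * a * C + a ^ 2 * P := by
        have hsymm : ∀ f g : Fin N → ℝ, ip f g = ip g f := by
          intro f g; simp only [hip, mul_comm (f _) (g _)]
        simp only [ip_add, ip_addr, ip_smul, ip_smulr]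
        rw [hsymm φ (Δh φ)]
        ring
      linarith [hexp ▸ h0]
    -- expand ip (A φ) φ
    have hexpand : ip (A φ) φ
        = P + (Δt * M) * ((1/2) * L + a * C + (α/2) * P + (1/4) * Q) := by
      rw [hA]
      simp only [ip_add, ip_smul]
      have : ip (Δh (Δh φ)) φ = L := (hsym (Δh φ) φ).symm ▸ rfl
      rw [this]
    rw [hexpand]
    have hΔtM : 0 < Δt * M := mul_pos hΔt hM
    nlinarith [mul_pos hΔtM hP, mul_nonneg hΔtM.le hQ, mul_nonneg hΔtM.le hkey,
      mul_pos hP (by linarith : (0:ℝ) < 2 - Δt * M * (a ^ 2 - α))]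
  refine ⟨hpos, ?_⟩
  have hinj : Function.Injective A := by
    rw [← LinearMap.ker_eq_bot, LinearMap.ker_eq_bot']
    intro φ hφ0
    by_contra h
    have := hpos φ h
    rw [hφ0, hip] at this
    simp at this
  exact ⟨hinj, LinearMap.injective_iff_surjective.mp hinj⟩
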